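/- arXiv:1807.11795 — 4 statements merged into one kernel-verified Lean document; each statement's English description precedes it below -/
import Mathlib

section
/- Let Ω ⊂ ℝⁿ be open and bounded, and u : closure(Ω) → ℝᵐ continuous, differentiable on Ω, with |D_v u(x)| < 1 for all x ∈ Ω and unit vectors v (spacelike gradient bound). Suppose the boundary data is acausal: |u(x) - u(x')| < |x - x'| for all distinct x, x' ∈ ∂Ω. Then |u(x) - u(x')| < |x - x'| for all distinct x, x' ∈ closure(Ω). -/
open Filter Topology

lemma aux_interior {n m : ℕ} {Ω : Set (EuclideanSpace ℝ (Fin n))} (hΩo : IsOpen Ω)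
    (u : EuclideanSpace ℝ (Fin n) → EuclideanSpace ℝ (Fin m))
    (hd : ∀ x ∈ Ω, DifferentiableAt ℝ u x)
    (hgrad : ∀ x ∈ Ω, ∀ v : EuclideanSpace ℝ (Fin n), ‖v‖ = 1 → ‖fderiv ℝ u x v‖ < 1)
    (c d : EuclideanSpace ℝ (Fin n)) (hcΩ : c ∈ Ω) (hcd : c ≠ d)
    (hmax : ∀ y ∈ Ω, ‖u y - u d‖ - ‖y - d‖ ≤ ‖u c - u d‖ - ‖c - d‖) : False := by
  set r : ℝ := ‖c - d‖ with hr
  have hr0 : 0 < r := by simpa [hr] using sub_ne_zero.mpr hcd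
  set μ : EuclideanSpace ℝ (Fin n) := r⁻¹ • (c - d) with hμ
  have hμ1 : ‖μ‖ = 1 := by
    rw [hμ, norm_smul, norm_inv, Real.norm_eq_abs, abs_of_pos hr0, ← hr]
    field_simp
  set L := fderiv ℝ u c with hL
  have hv : ‖L μ‖ < 1 := hgrad c hcΩ μ hμ1
  set ε : ℝ := (1 - ‖L μ‖) / 2 with hε
  have hε0 : 0 < ε := by rw [hε]; linarith
  -- derivative of s ↦ u (c - s • μ) at 0
  have hline : HasDerivAt (fun s : ℝ => c - s • μ) (-μ) 0 := by
    simpa using ((hasDerivAt_id (0:ℝ)).smul_const μ).const_sub c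
  have hder : HasDerivAt (fun s : ℝ => u (c - s • μ)) (L (-μ)) 0 := by
    have hF : HasFDerivAt u L c := (hd c hcΩ).hasFDerivAt
    have hF' : HasFDerivAt u L ((fun s : ℝ => c - s • μ) 0) := by simpa using hF
    exact hF'.comp_hasDerivAt 0 hline
  have hlo := (hasDerivAt_iff_isLittleO.mp hder).def hε0
  have h1 : ∀ᶠ s : ℝ in 𝓝 0, ‖u (c - s • μ) - u c - s • L (-μ)‖ ≤ ε * ‖s‖ := by
    filter_upwards [hlo] with s hs
    simpa using hs
  have h2 : ∀ᶠ s : ℝ in 𝓝 0, c - s • μ ∈ Ω := by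
    have : ContinuousAt (fun s : ℝ => c - s • μ) 0 := hline.continuousAt
    have := this.preimage_mem_nhds (hΩo.mem_nhds (by simpa using hcΩ))
    filter_upwards [this] with s hs using hs
  have h3 : ∀ᶠ s : ℝ in 𝓝 0, s < r := by
    have : Set.Iio r ∈ 𝓝 (0:ℝ) := Iio_mem_nhds hr0
    filter_upwards [this] with s hs using hs
  obtain ⟨s, hs, hs0⟩ :=
    (((h1.and (h2.and h3)).filter_mono nhdsWithin_le_nhds).and
      (eventually_mem_nhdsWithin (s := Set.Ioi (0:ℝ)))).exists
  obtain ⟨hsA, hsΩ, hsr⟩ := hs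
  have hs0' : (0:ℝ) < s := hs0
  set y := c - s • μ with hy
  -- ‖y - d‖ = r - s
  have hyd : ‖y - d‖ = r - s := by
    have : y - d = (1 - s * r⁻¹) • (c - d) := by
      rw [hy, hμ, smul_smul, sub_smul, one_smul]
      abel
    rw [this, norm_smul, Real.norm_eq_abs, ← hr]
    have h1s : 0 ≤ 1 - s * r⁻¹ := by
      rw [sub_nonneg]
      rw [← div_eq_mul_inv, div_le_one hr0]
      exact hsr.le
    rw [abs_of_nonneg h1s]
    field_simp
  -- bound ‖u y - u c‖
  have huy : ‖u y - u c‖ ≤ s * ‖L μ‖ + ε * s := by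
    have h := hsA
    have : ‖u y - u c‖ ≤ ‖s • L (-μ)‖ + ε * ‖s‖ := by
      calc ‖u y - u c‖ = ‖u y - u c - s • L (-μ) + s • L (-μ)‖ := by rw [sub_add_cancel]
        _ ≤ ‖u y - u c - s • L (-μ)‖ + ‖s • L (-μ)‖ := norm_add_le _ _
        _ ≤ ε * ‖s‖ + ‖s • L (-μ)‖ := by linarith [h]
        _ = ‖s • L (-μ)‖ + ε * ‖s‖ := by ring
    have hn : ‖s • L (-μ)‖ = s * ‖L μ‖ := by
      rw [norm_smul, Real.norm_eq_abs, abs_of_pos hs0', map_neg, norm_neg]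
    rw [hn, Real.norm_eq_abs, abs_of_pos hs0'] at this
    exact this
  have hmy := hmax y hsΩ
  have htri : ‖u c - u d‖ - ‖u y - u c‖ ≤ ‖u y - u d‖ := by
    have := norm_sub_le (u c - u y) (u y - u d)  -- not quite; use triangle
    calc ‖u c - u d‖ - ‖u y - u c‖ ≤ ‖u c - u y‖ + ‖u y - u d‖ - ‖u y - u c‖ := by
          have := norm_sub_le_norm_sub_add_norm_sub (u c) (u y) (u d)
          linarith [norm_sub_le_norm_sub_add_norm_sub (u c) (u y) (u d)]
      _ = ‖u y - u d‖ := by rw [norm_sub_rev (u c)]; ring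
  rw [hyd] at hmy
  have : s * (1 - ‖L μ‖ - ε) ≤ 0 := by nlinarith
  have hcon : 1 - ‖L μ‖ - ε ≤ 0 := by
    by_contra hpos
    push_neg at hpos
    nlinarith
  rw [hε] at hcon
  linarith

/-- A spacelike graph over a bounded domain with acausal boundary data is
acausal on the whole closure. -/
theorem acausal_on_closure
    {n m : ℕ} (Ω : Set (EuclideanSpace ℝ (Fin n)))
    (hΩo : IsOpen Ω) (hΩb : Bornology.IsBounded Ω)
    (u : EuclideanSpace ℝ (Fin n) → EuclideanSpace ℝ (Fin m))
    (hc : ContinuousOn u (closure Ω))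
    (hd : ∀ x ∈ Ω, DifferentiableAt ℝ u x)
    (hgrad : ∀ x ∈ Ω, ∀ v : EuclideanSpace ℝ (Fin n), ‖v‖ = 1 → ‖fderiv ℝ u x v‖ < 1)
    (hbdry : ∀ x ∈ frontier Ω, ∀ x' ∈ frontier Ω, x ≠ x' → ‖u x - u x'‖ < ‖x - x'‖) :
    ∀ x ∈ closure Ω, ∀ x' ∈ closure Ω, x ≠ x' → ‖u x - u x'‖ < ‖x - x'‖ := by
  by_contra hcon
  push_neg at hcon
  obtain ⟨x, hx, x', hx', hne, hge⟩ := hcon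
  set K := closure Ω with hK
  have hKc : IsCompact K := Metric.isCompact_of_isClosed_isBounded isClosed_closure hΩb.closure
  set g : EuclideanSpace ℝ (Fin n) × EuclideanSpace ℝ (Fin n) → ℝ :=
    fun p => ‖u p.1 - u p.2‖ - ‖p.1 - p.2‖ with hg
  have hgc : ContinuousOn g (K ×ˢ K) := by
    apply ContinuousOn.sub
    · exact ((hc.comp continuousOn_fst (fun p hp => hp.1)).sub
        (hc.comp continuousOn_snd (fun p hp => hp.2))).norm
    · exact ((continuous_fst.sub continuous_snd).norm).continuousOn
  obtain ⟨p, hp, hpmax⟩ := (hKc.prod hKc).exists_isMaxOn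
    ⟨(x, x'), Set.mk_mem_prod hx hx'⟩ hgc
  have hgx : 0 ≤ g (x, x') := by simp only [hg]; linarith
  have hM0 : 0 ≤ g p := le_trans hgx (hpmax (Set.mk_mem_prod hx hx'))
  obtain ⟨a, b, haK, hbK, hab, hmax2, hM⟩ :
      ∃ a b, a ∈ K ∧ b ∈ K ∧ a ≠ b ∧ (∀ q ∈ K ×ˢ K, g q ≤ g (a, b)) ∧ 0 ≤ g (a, b) := by
    by_cases hpq : p.1 = p.2
    · have hgp : g p = 0 := by simp [hg, hpq]
      have hgx0 : g (x, x') = 0 :=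
        le_antisymm (by rw [← hgp]; exact hpmax (Set.mk_mem_prod hx hx')) hgx
      exact ⟨x, x', hx, hx', hne,
        fun q hq => by rw [hgx0, ← hgp]; exact hpmax hq, by rw [hgx0]⟩
    · exact ⟨p.1, p.2, hp.1, hp.2, hpq, fun q hq => hpmax hq, hM0⟩
  have hclos : ∀ z ∈ K, z ∉ Ω → z ∈ frontier Ω := by
    intro z hz hzΩ
    rw [frontier, hΩo.interior_eq]
    exact ⟨hz, hzΩ⟩
  have haΩ : a ∉ Ω := by
    intro haΩ
    refine aux_interior hΩo u hd hgrad a b haΩ hab ?_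
    intro y hy
    have := hmax2 (y, b) (Set.mk_mem_prod (subset_closure hy) hbK)
    simpa [hg] using this
  have hbΩ : b ∉ Ω := by
    intro hbΩ
    refine aux_interior hΩo u hd hgrad b a hbΩ hab.symm ?_
    intro y hy
    have := hmax2 (a, y) (Set.mk_mem_prod haK (subset_closure hy))
    simp only [hg] at this ⊢
    rw [norm_sub_rev (u a) (u y), norm_sub_rev a y,
      norm_sub_rev (u a) (u b), norm_sub_rev a b] at this
    exact this
  have hfin := hbdry a (hclos a haK haΩ) b (hclos b hbK hbΩ) hab
  simp only [hg] at hM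
  linarith
end

section
/- Fix n ≥ 1 and Λ ≤ 0. For K in the range K > 0, the function f_{K,Λ}(r) = ∫₀^r (K + Λtⁿ/n)/sqrt(t^{2n-2} + (K + Λtⁿ/n)²) dt is strictly increasing in K for each fixed r in the common domain 0 < r < (nK₁/|Λ|)^{1/n} (with K ≥ K₁), and f_{K,Λ}(r) → r as K → +∞ pointwise. -/
/-- The barrier profile function `f_{K,Λ}`. -/
noncomputable def barrierProfile (n : ℕ) (K Λ : ℝ) (r : ℝ) : ℝ :=
  ∫ t in (0:ℝ)..r,
    (K + Λ * t ^ n / n) / Real.sqrt (t ^ (2 * n - 2) + (K + Λ * t ^ n / n) ^ 2)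

/-! For `t > 0` the integrand is `φ (K + Λ tⁿ / n)` with `φ x = x / √(c + x²)` and
`c = t^(2n-2) > 0`. The map `φ` is odd, strictly increasing, bounded by `1` in absolute value and
tends to `1` at `+∞`, so strict monotonicity in `K` holds pointwise under the integral and the
limit `∫₀ʳ 1 = r` follows by dominated convergence with the constant bound `1`. -/

open Real Filter Set MeasureTheory Topology Interval

lemma div_sqrt_add_sq_lt_of_nonneg {c x y : ℝ} (hc : 0 < c) (hx : 0 ≤ x) (hxy : x < y) :
    x / √(c + x ^ 2) < y / √(c + y ^ 2) := by
  have hy : 0 < y := hx.trans_lt hxy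
  rw [div_lt_div_iff₀ (by positivity) (by positivity)]
  refine lt_of_pow_lt_pow_left₀ 2 (by positivity) ?_
  rw [mul_pow, mul_pow, sq_sqrt (by positivity), sq_sqrt (by positivity)]
  nlinarith [mul_lt_mul_of_pos_left (pow_lt_pow_left₀ hxy hx two_ne_zero) hc]

lemma strictMono_div_sqrt_add_sq {c : ℝ} (hc : 0 < c) :
    StrictMono fun x : ℝ => x / √(c + x ^ 2) :=
  strictMono_of_odd_strictMonoOn_nonneg (fun x => by simp [neg_div])
    fun _ hx _ _ hxy => div_sqrt_add_sq_lt_of_nonneg hc hx hxy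

lemma abs_div_sqrt_add_sq_le_one {c : ℝ} (hc : 0 ≤ c) (x : ℝ) : |x / √(c + x ^ 2)| ≤ 1 := by
  rw [abs_div, abs_of_nonneg (sqrt_nonneg _)]
  exact div_le_one_of_le₀ (abs_le_sqrt (by linarith)) (sqrt_nonneg _)

lemma tendsto_div_sqrt_add_sq_atTop (c : ℝ) :
    Tendsto (fun x : ℝ => x / √(c + x ^ 2)) atTop (𝓝 1) := by
  have h : Tendsto (fun x : ℝ => (√(c / x ^ 2 + 1))⁻¹) atTop (𝓝 1) := by
    have := ((tendsto_const_nhds (x := c)).div_atTop (tendsto_pow_atTop two_ne_zero)).add_const 1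
    simpa using this.sqrt.inv₀ (by simp)
  refine h.congr' ?_
  filter_upwards [eventually_gt_atTop 0] with x hx
  have : c + x ^ 2 = x ^ 2 * (c / x ^ 2 + 1) := by field_simp
  rw [this, sqrt_mul (sq_nonneg x), sqrt_sq hx.le, div_mul_cancel_left₀ hx.ne']

section IntegralDivSqrtAddSq

variable {a c : ℝ → ℝ} {r : ℝ} (ha : Measurable a) (hc : Measurable c)
include ha hc

lemma intervalIntegrable_div_sqrt_add_sq (hc_nonneg : ∀ t ∈ Ι 0 r, 0 ≤ c t) (K : ℝ) :
    IntervalIntegrable (fun t => (K + a t) / √(c t + (K + a t) ^ 2)) volume 0 r :=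
  intervalIntegrable_const.mono_fun' (by fun_prop : Measurable _).aestronglyMeasurable <|
    (ae_restrict_iff' measurableSet_uIoc).2 <| ae_of_all _ fun t ht =>
      abs_div_sqrt_add_sq_le_one (hc_nonneg t ht) _

lemma strictMono_integral_div_sqrt_add_sq (hr : 0 < r) (hc_pos : ∀ t ∈ Ioc 0 r, 0 < c t) :
    StrictMono fun K => ∫ t in 0..r, (K + a t) / √(c t + (K + a t) ^ 2) := by
  intro K K' hKK'
  have hc_nonneg : ∀ t ∈ Ι 0 r, 0 ≤ c t := by
    rw [uIoc_of_le hr.le]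
    exact fun t ht => (hc_pos t ht).le
  have hlt : Ioc 0 r ⊆
      {t | (K + a t) / √(c t + (K + a t) ^ 2) < (K' + a t) / √(c t + (K' + a t) ^ 2)} :=
    fun t ht => strictMono_div_sqrt_add_sq (hc_pos t ht) (by linarith)
  refine intervalIntegral.integral_lt_integral_of_ae_le_of_measure_setOfPred_lt_ne_zero hr.le
    (intervalIntegrable_div_sqrt_add_sq ha hc hc_nonneg K)
    (intervalIntegrable_div_sqrt_add_sq ha hc hc_nonneg K')
    ((ae_restrict_iff' measurableSet_Ioc).2 <| ae_of_all _ fun _ ht => (hlt ht).le) ?_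
  rw [Measure.restrict_apply' measurableSet_Ioc, inter_eq_right.2 hlt, volume_Ioc]
  simpa using hr

lemma tendsto_integral_div_sqrt_add_sq_atTop (hc_nonneg : ∀ t ∈ Ι 0 r, 0 ≤ c t) :
    Tendsto (fun K => ∫ t in 0..r, (K + a t) / √(c t + (K + a t) ^ 2)) atTop (𝓝 r) := by
  have h := intervalIntegral.tendsto_integral_filter_of_dominated_convergence (μ := volume)
    (f := fun _ => 1) (l := atTop) (fun _ => 1)
    (.of_forall fun _ => (by fun_prop : Measurable _).aestronglyMeasurable)
    (.of_forall fun K => ae_of_all _ fun t ht => abs_div_sqrt_add_sq_le_one (hc_nonneg t ht) _)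
    intervalIntegrable_const
    (ae_of_all _ fun t _ => (tendsto_div_sqrt_add_sq_atTop (c t)).comp
      (tendsto_atTop_add_const_right _ (a t) tendsto_id))
  simpa using h

end IntegralDivSqrtAddSq

theorem barrierProfile_strictMono_and_tendsto_general
    {n : ℕ} {K₁ Λ r : ℝ}
    (hr : 0 < r) :
    (∀ K K' : ℝ, K₁ ≤ K → K < K' →
        barrierProfile n K Λ r < barrierProfile n K' Λ r) ∧
      Filter.Tendsto (fun K => barrierProfile n K Λ r) Filter.atTop (nhds r) := by
  have ha : Measurable fun t : ℝ => Λ * t ^ n / n := by fun_prop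
  have hc : Measurable fun t : ℝ => t ^ (2 * n - 2) := by fun_prop
  have hc_pos : ∀ t ∈ Ioc 0 r, 0 < t ^ (2 * n - 2) := fun t ht => pow_pos ht.1 _
  refine ⟨fun K K' _ hKK' => strictMono_integral_div_sqrt_add_sq ha hc hr hc_pos hKK',
    tendsto_integral_div_sqrt_add_sq_atTop ha hc ?_⟩
  rw [uIoc_of_le hr.le]
  exact fun t ht => (hc_pos t ht).le

/-- For fixed `Λ ≤ 0` and `r` in the common domain determined by `K₁ > 0`,
the barrier profile `f_{K,Λ}(r)` is strictly increasing in `K ≥ K₁`, and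
`f_{K,Λ}(r) → r` as `K → +∞`. -/
theorem barrierProfile_strictMono_and_tendsto
    {n : ℕ} (hn : 1 ≤ n) {K₁ Λ r : ℝ} (hK₁ : 0 < K₁) (hΛ : Λ ≤ 0)
    (hr : 0 < r) (hdom : Λ < 0 → r < (n * K₁ / |Λ|) ^ ((1:ℝ) / n)) :
    (∀ K K' : ℝ, K₁ ≤ K → K < K' →
        barrierProfile n K Λ r < barrierProfile n K' Λ r) ∧
      Filter.Tendsto (fun K => barrierProfile n K Λ r) Filter.atTop (nhds r) :=
  barrierProfile_strictMono_and_tendsto_general hr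
end

section
/- Fix n ≥ 1, K > 0, Λ ≤ 0, and let f = f_{K,Λ} with f'(r)/sqrt(1 - f'(r)²) = Λr/n + K r^{1-n}. Then f satisfies the ODE (n-1) f'(r)/(r sqrt(1 - f'(r)²)) + f''(r)/(1 - f'(r)²)^{3/2} = Λ on its domain 0 < r < (nK/|Λ|)^{1/n}. -/
section SlopeToVelocity

variable (w : ℝ)

lemma one_sub_sq_div_sqrt_one_add_sq :
    1 - (w / √(1 + w ^ 2)) ^ 2 = (√(1 + w ^ 2))⁻¹ ^ 2 := by
  have hS : 0 < √(1 + w ^ 2) := Real.sqrt_pos.mpr (by positivity)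
  field_simp
  rw [Real.sq_sqrt (by positivity)]
  ring

lemma sqrt_one_sub_sq_div_sqrt_one_add_sq :
    √(1 - (w / √(1 + w ^ 2)) ^ 2) = (√(1 + w ^ 2))⁻¹ := by
  rw [one_sub_sq_div_sqrt_one_add_sq, Real.sqrt_sq (by positivity)]

lemma one_sub_sq_div_sqrt_one_add_sq_rpow_three_halves :
    (1 - (w / √(1 + w ^ 2)) ^ 2) ^ (3 / 2 : ℝ) = (√(1 + w ^ 2))⁻¹ ^ 3 := by
  rw [one_sub_sq_div_sqrt_one_add_sq, ← Real.rpow_natCast _ 2, ← Real.rpow_mul (by positivity)]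
  norm_num

lemma div_sqrt_one_sub_sq_div_sqrt_one_add_sq :
    w / √(1 + w ^ 2) / √(1 - (w / √(1 + w ^ 2)) ^ 2) = w := by
  have hS : 0 < √(1 + w ^ 2) := Real.sqrt_pos.mpr (by positivity)
  rw [sqrt_one_sub_sq_div_sqrt_one_add_sq]
  field_simp

end SlopeToVelocity

lemma HasDerivAt.div_sqrt_one_add_sq {w : ℝ → ℝ} {w' r : ℝ} (hw : HasDerivAt w w' r) :
    HasDerivAt (fun t ↦ w t / √(1 + w t ^ 2)) (w' * (√(1 + w r ^ 2))⁻¹ ^ 3) r := by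
  have hpos : 0 < 1 + w r ^ 2 := by positivity
  have hS : 0 < √(1 + w r ^ 2) := Real.sqrt_pos.mpr hpos
  refine (hw.div (((hw.pow 2).const_add 1).sqrt hpos.ne') hS.ne').congr_deriv ?_
  simp only [Pi.pow_apply]
  field_simp
  rw [Real.sq_sqrt hpos.le]
  ring

lemma abs_div_sqrt_add_sq_le_one_s8 {a : ℝ} (ha : 0 ≤ a) (g : ℝ) : |g / √(a + g ^ 2)| ≤ 1 := by
  rw [abs_div, abs_of_nonneg (Real.sqrt_nonneg _), ← Real.sqrt_sq_eq_abs]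
  exact div_le_one_of_le₀ (Real.sqrt_le_sqrt (by linarith)) (Real.sqrt_nonneg _)

/-- The paper's `Λ r / n + K r ^ (1 - n)`, which is `f' / √(1 - f'²)` for `f = f_{K,Λ}`. -/
noncomputable def barrierSlope (n : ℕ) (K Λ r : ℝ) : ℝ := Λ * r / n + K / r ^ (n - 1)

lemma hasDerivAt_barrierSlope {n : ℕ} (hn : 1 ≤ n) (K Λ : ℝ) {r : ℝ} (hr : r ≠ 0) :
    HasDerivAt (barrierSlope n K Λ) (Λ / n - (n - 1) * K / r ^ n) r := by
  obtain ⟨m, rfl⟩ : ∃ m, n = m + 1 := ⟨n - 1, by omega⟩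
  have hslope : barrierSlope (m + 1) K Λ = fun t ↦ Λ / (m + 1 : ℕ) * t + K * t ^ (-(m : ℤ)) := by
    ext t
    rw [barrierSlope, Nat.add_sub_cancel, zpow_neg, zpow_natCast]
    ring
  rw [hslope]
  refine (((hasDerivAt_id r).const_mul (Λ / (m + 1 : ℕ))).add
    ((hasDerivAt_zpow (-(m : ℤ)) r (Or.inl hr)).const_mul K)).congr_deriv ?_
  rw [← neg_add', zpow_neg, ← Nat.cast_succ, zpow_natCast]
  push_cast
  field_simp
  ring

lemma barrierSlope_cmc {n : ℕ} (hn : 1 ≤ n) (K Λ : ℝ) {r : ℝ} (hr : r ≠ 0) :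
    (n - 1 : ℝ) / r * barrierSlope n K Λ r + (Λ / n - (n - 1) * K / r ^ n) = Λ := by
  obtain ⟨m, rfl⟩ : ∃ m, n = m + 1 := ⟨n - 1, by omega⟩
  simp only [barrierSlope, Nat.add_sub_cancel, Nat.cast_add, Nat.cast_one]
  field_simp
  ring

lemma barrierProfile_integrand_eq {n : ℕ} (hn : 1 ≤ n) (K Λ : ℝ) {t : ℝ} (ht : 0 < t) :
    (K + Λ * t ^ n / n) / √(t ^ (2 * n - 2) + (K + Λ * t ^ n / n) ^ 2)
      = barrierSlope n K Λ t / √(1 + barrierSlope n K Λ t ^ 2) := by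
  have ha : 0 < t ^ (n - 1) := pow_pos ht _
  have hg : K + Λ * t ^ n / n = t ^ (n - 1) * barrierSlope n K Λ t := by
    rw [barrierSlope, ← pow_sub_one_mul (by omega : n ≠ 0)]
    field_simp
    ring
  have hsq : t ^ (2 * n - 2) = (t ^ (n - 1)) ^ 2 := by
    rw [← pow_mul]; congr 1; omega
  rw [hg, hsq, show ∀ a s : ℝ, a ^ 2 + (a * s) ^ 2 = a ^ 2 * (1 + s ^ 2) by intros; ring,
    Real.sqrt_mul (sq_nonneg _), Real.sqrt_sq ha.le, mul_div_mul_left _ _ ha.ne']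

lemma hasDerivAt_barrierProfile {n : ℕ} (hn : 1 ≤ n) (K Λ : ℝ) {r : ℝ} (hr : 0 < r) :
    HasDerivAt (barrierProfile n K Λ)
      (barrierSlope n K Λ r / √(1 + barrierSlope n K Λ r ^ 2)) r := by
  set φ : ℝ → ℝ := fun t ↦ (K + Λ * t ^ n / n) / √(t ^ (2 * n - 2) + (K + Λ * t ^ n / n) ^ 2)
  have hφ_meas : Measurable φ := by fun_prop
  -- `φ` may jump at `t = 0`; being bounded, it is still integrable
  have hφ_le : ∀ t, ‖φ t‖ ≤ 1 := fun t ↦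
    abs_div_sqrt_add_sq_le_one_s8 (Even.pow_nonneg ⟨n - 1, by omega⟩ t) _
  have hφ_cont : ContinuousAt φ r := by
    refine ContinuousAt.div (by fun_prop) (by fun_prop) (Real.sqrt_ne_zero'.mpr ?_)
    have := pow_pos hr (2 * n - 2)
    positivity
  rw [← barrierProfile_integrand_eq hn K Λ hr]
  exact intervalIntegral.integral_hasDerivAt_right
    (intervalIntegrable_const.mono_fun' hφ_meas.aestronglyMeasurable
      (MeasureTheory.ae_of_all _ hφ_le))
    hφ_meas.stronglyMeasurable.stronglyMeasurableAtFilter hφ_cont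

theorem barrierProfile_CMC_ODE_general
    {n : ℕ} (hn : 1 ≤ n) {K Λ r : ℝ}
    (hr : 0 < r) :
    deriv (barrierProfile n K Λ) r /
        Real.sqrt (1 - (deriv (barrierProfile n K Λ) r) ^ 2)
      = Λ * r / n + K / r ^ (n - 1) ∧
    (n - 1 : ℝ) * deriv (barrierProfile n K Λ) r /
        (r * Real.sqrt (1 - (deriv (barrierProfile n K Λ) r) ^ 2))
      + deriv (deriv (barrierProfile n K Λ)) r /
        (1 - (deriv (barrierProfile n K Λ) r) ^ 2) ^ ((3:ℝ) / 2) = Λ := by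
  set w := barrierSlope n K Λ
  have hf' : deriv (barrierProfile n K Λ) r = w r / √(1 + w r ^ 2) :=
    (hasDerivAt_barrierProfile hn K Λ hr).deriv
  have hf'' : deriv (deriv (barrierProfile n K Λ)) r
      = (Λ / n - (n - 1) * K / r ^ n) * (√(1 + w r ^ 2))⁻¹ ^ 3 := by
    have hderiv : deriv (barrierProfile n K Λ) =ᶠ[nhds r] fun t ↦ w t / √(1 + w t ^ 2) := by
      filter_upwards [Ioi_mem_nhds hr] with t ht
      exact (hasDerivAt_barrierProfile hn K Λ ht).deriv
    rw [hderiv.deriv_eq]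
    exact (hasDerivAt_barrierSlope hn K Λ hr.ne').div_sqrt_one_add_sq.deriv
  have hS : (√(1 + w r ^ 2))⁻¹ ^ 3 ≠ 0 := by positivity
  rw [hf', hf'', one_sub_sq_div_sqrt_one_add_sq_rpow_three_halves, mul_div_cancel_right₀ _ hS,
    mul_div_mul_comm, div_sqrt_one_sub_sq_div_sqrt_one_add_sq]
  exact ⟨rfl, barrierSlope_cmc hn K Λ hr.ne'⟩

/-- The barrier profile `f = f_{K,Λ}` satisfies
`f'/√(1-f'²) = Λr/n + K r^{1-n}` and the constant mean curvature ODE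
`(n-1) f'/(r √(1-f'²)) + f''/(1-f'²)^{3/2} = Λ` on its domain. -/
theorem barrierProfile_CMC_ODE
    {n : ℕ} (hn : 1 ≤ n) {K Λ r : ℝ} (hK : 0 < K) (hΛ : Λ ≤ 0)
    (hr : 0 < r) (hdom : Λ < 0 → r < (n * K / |Λ|) ^ ((1:ℝ) / n)) :
    deriv (barrierProfile n K Λ) r /
        Real.sqrt (1 - (deriv (barrierProfile n K Λ) r) ^ 2)
      = Λ * r / n + K / r ^ (n - 1) ∧
    (n - 1 : ℝ) * deriv (barrierProfile n K Λ) r /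
        (r * Real.sqrt (1 - (deriv (barrierProfile n K Λ) r) ^ 2))
      + deriv (deriv (barrierProfile n K Λ)) r /
        (1 - (deriv (barrierProfile n K Λ) r) ^ 2) ^ ((3:ℝ) / 2) = Λ :=
  barrierProfile_CMC_ODE_general hn hr
end

section
/- Let Ω ⊂ ℝⁿ be a bounded domain, u : closure(Ω) → ℝᵐ a spacelike graph with acausal boundary data, and let ξ ∈ ℝⁿ \ closure(Ω), η ∈ ℝᵐ. If |u(x') - η| < |x' - ξ| for all x' ∈ ∂Ω and u satisfies the gradient bound |D_v u| < 1 on Ω, then |u(x) - η| < |x - ξ| for all x ∈ closure(Ω); that is, the graph Σ = {(x, u(x)) : x ∈ closure(Ω)} is contained in the open spacelike cone {(x,y) : |y - η| < |x - ξ|} with apex (ξ, η). -/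
/-- A spacelike graph whose boundary lies strictly inside the spacelike cone
with apex `(ξ, η)`, `ξ ∉ closure Ω`, remains inside that cone over all of `closure Ω`. -/
theorem graph_in_spacelike_cone
    {n m : ℕ} (Ω : Set (EuclideanSpace ℝ (Fin n)))
    (hΩo : IsOpen Ω) (hΩb : Bornology.IsBounded Ω)
    (u : EuclideanSpace ℝ (Fin n) → EuclideanSpace ℝ (Fin m))
    (ξ : EuclideanSpace ℝ (Fin n)) (η : EuclideanSpace ℝ (Fin m))
    (hξ : ξ ∉ closure Ω)
    (hc : ContinuousOn u (closure Ω))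
    (hd : ∀ x ∈ Ω, DifferentiableAt ℝ u x)
    (hgrad : ∀ x ∈ Ω, ∀ v : EuclideanSpace ℝ (Fin n), ‖v‖ = 1 → ‖fderiv ℝ u x v‖ < 1)
    (hbdry : ∀ x ∈ frontier Ω, ‖u x - η‖ < ‖x - ξ‖) :
    ∀ x ∈ closure Ω, ‖u x - η‖ < ‖x - ξ‖ := by
  intro x hx
  set f : EuclideanSpace ℝ (Fin n) → ℝ := fun z => ‖u z - η‖ - ‖z - ξ‖ with hf
  have hfc : ContinuousOn f (closure Ω) :=
    ((hc.sub continuousOn_const).norm).sub ((continuous_id.sub continuous_const).norm.continuousOn)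
  have hK : IsCompact (closure Ω) := Metric.isCompact_of_isClosed_isBounded isClosed_closure hΩb.closure
  obtain ⟨x₀, hx₀, hmax⟩ := hK.exists_isMaxOn ⟨x, hx⟩ hfc
  suffices h : f x₀ < 0 by
    have h2 : f x ≤ f x₀ := hmax hx
    simp only [hf] at h2 h
    linarith
  -- x₀ is in Ω or in the frontier
  have hsplit : x₀ ∈ Ω ∨ x₀ ∈ frontier Ω := by
    rcases Classical.em (x₀ ∈ Ω) with h | h
    · exact Or.inl h
    · refine Or.inr ⟨hx₀, fun h' => ?_⟩
      rw [hΩo.interior_eq] at h'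
      exact h h'
  rcases hsplit with hin | hfr
  swap
  · have := hbdry x₀ hfr
    simp only [hf]; linarith
  -- interior case: contradiction with maximality
  exfalso
  have hne : x₀ ≠ ξ := fun h => hξ (h ▸ hx₀)
  set r : ℝ := ‖x₀ - ξ‖ with hr
  have hr0 : 0 < r := by
    simpa [hr] using norm_sub_pos_iff.mpr hne
  set v : EuclideanSpace ℝ (Fin n) := r⁻¹ • (ξ - x₀) with hv
  have hvn : ‖v‖ = 1 := by
    rw [hv, norm_smul, norm_sub_rev, ← hr, norm_inv, Real.norm_eq_abs,
      abs_of_pos hr0, inv_mul_cancel₀ hr0.ne']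
  set L := fderiv ℝ u x₀ with hL
  set c : ℝ := ‖L v‖ with hcdef
  have hc1 : c < 1 := hgrad x₀ hin v hvn
  have hε : (0:ℝ) < (1 - c) / 2 := by linarith
  have hder : HasFDerivAt u L x₀ := (hd x₀ hin).hasFDerivAt
  have hlo := (hasFDerivAt_iff_isLittleO_nhds_zero.mp hder).def hε
  -- pull back along t ↦ t • v on 𝓝[>] 0
  have htend : Filter.Tendsto (fun t : ℝ => t • v) (nhdsWithin 0 (Set.Ioi 0)) (nhds 0) := by
    have : Filter.Tendsto (fun t : ℝ => t • v) (nhds 0) (nhds ((0:ℝ) • v)) :=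
      (continuous_id.smul continuous_const).tendsto 0
    simpa using this.mono_left nhdsWithin_le_nhds
  have h1 : ∀ᶠ t : ℝ in nhdsWithin 0 (Set.Ioi 0),
      ‖u (x₀ + t • v) - u x₀ - L (t • v)‖ ≤ (1 - c) / 2 * ‖t • v‖ := htend.eventually hlo
  have h2 : ∀ᶠ t : ℝ in nhdsWithin 0 (Set.Ioi 0), x₀ + t • v ∈ Ω := by
    have hcont : Continuous (fun t : ℝ => x₀ + t • v) :=
      continuous_const.add (continuous_id.smul continuous_const)
    have : Filter.Tendsto (fun t : ℝ => x₀ + t • v) (nhdsWithin 0 (Set.Ioi 0)) (nhds x₀) := by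
      have := hcont.tendsto 0
      simpa using this.mono_left nhdsWithin_le_nhds
    exact this.eventually (hΩo.mem_nhds hin)
  have h3 : ∀ᶠ t : ℝ in nhdsWithin 0 (Set.Ioi 0), t < r :=
    Filter.Eventually.filter_mono nhdsWithin_le_nhds (Filter.Tendsto.eventually_lt_const hr0 Filter.tendsto_id)
  have h4 : ∀ᶠ t : ℝ in nhdsWithin 0 (Set.Ioi 0), 0 < t := self_mem_nhdsWithin
  obtain ⟨t, ⟨⟨ht1, ht2⟩, ht3⟩, ht4⟩ := (((h1.and h2).and h3).and h4).exists
  -- notation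
  set xt := x₀ + t • v with hxt
  have htv : ‖t • v‖ = t := by
    rw [norm_smul, hvn, Real.norm_eq_abs, abs_of_pos ht4, mul_one]
  have hLtv : ‖L (t • v)‖ = t * c := by
    rw [map_smul, norm_smul, Real.norm_eq_abs, abs_of_pos ht4, hcdef]
  -- ‖u xt - u x₀‖ ≤ t*c + (1-c)/2 * t
  have hstep : ‖u xt - u x₀‖ ≤ t * c + (1 - c) / 2 * t := by
    have := norm_sub_norm_le (u xt - u x₀) (L (t • v))
    calc ‖u xt - u x₀‖ ≤ ‖u xt - u x₀ - L (t • v)‖ + ‖L (t • v)‖ := by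
          have := norm_add_le (u xt - u x₀ - L (t • v)) (L (t • v))
          simpa using this
      _ ≤ (1 - c) / 2 * t + t * c := by
          rw [htv] at ht1; exact add_le_add ht1 hLtv.le
      _ = t * c + (1 - c) / 2 * t := by ring
  -- ‖xt - ξ‖ = r - t
  have hdist : ‖xt - ξ‖ = r - t := by
    have : xt - ξ = (1 - t / r) • (x₀ - ξ) := by
      rw [hxt, hv, div_eq_mul_inv]
      module
    rw [this, norm_smul, Real.norm_eq_abs, ← hr,
      abs_of_nonneg (by rw [sub_nonneg]; exact (div_le_one hr0).mpr ht3.le)]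
    field_simp
  -- maximality: f xt ≤ f x₀
  have hmt : f xt ≤ f x₀ := hmax (subset_closure ht2)
  simp only [hf, hdist, ← hr] at hmt
  -- so ‖u xt - η‖ ≤ ‖u x₀ - η‖ - t
  have hkey : t ≤ ‖u xt - u x₀‖ := by
    have := norm_sub_norm_le (u x₀ - η) (u xt - η)
    have heq : u x₀ - η - (u xt - η) = u x₀ - u xt := by abel
    rw [heq] at this
    rw [norm_sub_rev]
    linarith
  nlinarith
end
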